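/- Let ℒ = [[P - q*xb + QQ²*xb/(q - p*x), PP*QQ*xb/(p*x - q)],[PP'*QQ*xb/(q - p*x), PP*PP'*xb/(p*x - q)]] and ℳ = [[QQ*QQ'/(q - p*x), PP*QQ'/(p*x - q)],[PP*QQ/(q - p*x), PP²/(p*x - q) + (Q*xt - p)/x]], where PP² = p² - λ, PP'² = P² - λ, QQ² = q² - λ, QQ'² = Q² - λ. Then the compatibility condition ℒ(shifted in m)·ℳ = ℳ(shifted in l)·ℒ holds (for all λ in a nonempty open set, equivalently as an identity in λ) if and only if x, xb, xt, xbt satisfy the lattice sine-Gordon equation xbt/x = ((P - q*xb)/(q - P*xb))*((Q - p*xt)/(p - Q*xt)). -/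

import Mathlib

set_option maxHeartbeats 2000000
set_option maxRecDepth 100000

open Matrix

/-- The compatibility condition of the Lax pair (B.4), holding as an identity
in the spectral parameter `lam`, is equivalent to the lattice sine-Gordon
equation. -/
theorem Lax_lsG
    (x xb xt xbt p P q Q : ℂ)
    (hx : x ≠ 0) (hxb : xb ≠ 0) (hxt : xt ≠ 0) (hxbt : xbt ≠ 0)
    (h1 : q - p * x ≠ 0) (h2 : Q - p * xt ≠ 0) (h3 : q - P * xb ≠ 0)
    (h4 : p - Q * xt ≠ 0) :
    (∀ lam PP PP' QQ QQ' : ℂ,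
      PP ^ 2 = p ^ 2 - lam → PP' ^ 2 = P ^ 2 - lam →
      QQ ^ 2 = q ^ 2 - lam → QQ' ^ 2 = Q ^ 2 - lam →
      !![P - Q * xbt + QQ' ^ 2 * xbt / (Q - p * xt), PP * QQ' * xbt / (p * xt - Q);
         PP' * QQ' * xbt / (Q - p * xt), PP * PP' * xbt / (p * xt - Q)] *
        !![QQ * QQ' / (q - p * x), PP * QQ' / (p * x - q);
           PP * QQ / (q - p * x), PP ^ 2 / (p * x - q) + (Q * xt - p) / x] =
      !![QQ * QQ' / (q - P * xb), PP' * QQ' / (P * xb - q);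
         PP' * QQ / (q - P * xb), PP' ^ 2 / (P * xb - q) + (Q * xbt - P) / xb] *
        !![P - q * xb + QQ ^ 2 * xb / (q - p * x), PP * QQ * xb / (p * x - q);
           PP' * QQ * xb / (q - p * x), PP * PP' * xb / (p * x - q)]) ↔
    xbt / x = ((P - q * xb) / (q - P * xb)) * ((Q - p * xt) / (p - Q * xt)) := by
  have h2' : p * xt - Q ≠ 0 := fun h => h2 (by linear_combination -h)
  have h1' : p * x - q ≠ 0 := fun h => h1 (by linear_combination -h)
  have h3' : P * xb - q ≠ 0 := fun h => h3 (by linear_combination -h)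
  constructor
  · intro hc
    have hE : xbt * ((q - P * xb) * (p - Q * xt)) = x * ((P - q * xb) * (Q - p * xt)) := by
      have pick : ∀ a b : ℂ, ∃ lam : ℂ, a ^ 2 - lam ≠ 0 ∧ b ^ 2 - lam ≠ 0 := by
        intro a b
        by_cases h : a ^ 2 = b ^ 2 + 1
        · exact ⟨b ^ 2 + 2, by rw [h]; norm_num, by norm_num⟩
        · exact ⟨b ^ 2 + 1, fun hh => h (by linear_combination hh), by norm_num⟩
      by_cases hq : q = 0
      · -- use entry (0,0); here p ≠ 0
        have hp : p ≠ 0 := by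
          intro hp0; exact h1 (by rw [hq, hp0]; ring)
        obtain ⟨lam, hql, hQl⟩ := pick q Q
        obtain ⟨PP, hPP⟩ := IsAlgClosed.exists_pow_nat_eq (p ^ 2 - lam) (n := 2) (by norm_num)
        obtain ⟨PP', hPP'⟩ := IsAlgClosed.exists_pow_nat_eq (P ^ 2 - lam) (n := 2) (by norm_num)
        obtain ⟨QQ, hQQ⟩ := IsAlgClosed.exists_pow_nat_eq (q ^ 2 - lam) (n := 2) (by norm_num)
        obtain ⟨QQ', hQQ'⟩ := IsAlgClosed.exists_pow_nat_eq (Q ^ 2 - lam) (n := 2) (by norm_num)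
        have hQQ0 : QQ ≠ 0 := fun h => hql (by rw [← hQQ, h]; ring)
        have hQQ'0 : QQ' ≠ 0 := fun h => hQl (by rw [← hQQ', h]; ring)
        have hcc := hc lam PP PP' QQ QQ' hPP hPP' hQQ hQQ'
        rw [Matrix.mul_fin_two, Matrix.mul_fin_two] at hcc
        have h00 := Matrix.ext_iff.mpr hcc 0 0
        simp only [Matrix.cons_val_zero, Matrix.cons_val', Matrix.empty_val',
          Matrix.cons_val_fin_one, Matrix.of_apply, Matrix.cons_val_one, Matrix.head_cons,
          Matrix.head_fin_const] at h00
        field_simp at h00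
        have key : (p * (q - p * x) ^ 3 * (Q - p * xt) * (q - P * xb) * (QQ * QQ')) *
            (xbt * ((q - P * xb) * (p - Q * xt)) - x * ((P - q * xb) * (Q - p * xt))) = 0 := by
          linear_combination (-((q - p * x) ^ 3 * QQ * QQ')) * h00 +
            (xbt * (q - p * x) ^ 3 * (Q - p * xt) * (q - P * xb) ^ 2 * QQ * QQ' * (-1)) * hPP +
            (xb * (q - p * x) ^ 3 * (Q - p * xt) ^ 2 * (q - P * xb) * QQ * QQ') * hPP' +
            (xb * (q - p * x) ^ 3 * (Q - p * xt) ^ 2 * (q - P * xb) * QQ * QQ' * (-1)) * hQQ +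
            (xbt * (q - p * x) ^ 3 * (Q - p * xt) * (q - P * xb) ^ 2 * QQ * QQ') * hQQ'
        have hne : p * (q - p * x) ^ 3 * (Q - p * xt) * (q - P * xb) * (QQ * QQ') ≠ 0 := by
          exact mul_ne_zero (mul_ne_zero (mul_ne_zero (mul_ne_zero hp (pow_ne_zero 3 h1)) h2) h3)
            (mul_ne_zero hQQ0 hQQ'0)
        have hz := (mul_eq_zero.mp key).resolve_left hne
        linear_combination hz
      · -- use entry (1,1); here q ≠ 0
        obtain ⟨lam, hpl, hPl⟩ := pick p P
        obtain ⟨PP, hPP⟩ := IsAlgClosed.exists_pow_nat_eq (p ^ 2 - lam) (n := 2) (by norm_num)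
        obtain ⟨PP', hPP'⟩ := IsAlgClosed.exists_pow_nat_eq (P ^ 2 - lam) (n := 2) (by norm_num)
        obtain ⟨QQ, hQQ⟩ := IsAlgClosed.exists_pow_nat_eq (q ^ 2 - lam) (n := 2) (by norm_num)
        obtain ⟨QQ', hQQ'⟩ := IsAlgClosed.exists_pow_nat_eq (Q ^ 2 - lam) (n := 2) (by norm_num)
        have hPP0 : PP ≠ 0 := fun h => hpl (by rw [← hPP, h]; ring)
        have hPP'0 : PP' ≠ 0 := fun h => hPl (by rw [← hPP', h]; ring)
        have hcc := hc lam PP PP' QQ QQ' hPP hPP' hQQ hQQ'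
        rw [Matrix.mul_fin_two, Matrix.mul_fin_two] at hcc
        have h11 := Matrix.ext_iff.mpr hcc 1 1
        simp only [Matrix.cons_val_zero, Matrix.cons_val', Matrix.empty_val',
          Matrix.cons_val_fin_one, Matrix.of_apply, Matrix.cons_val_one, Matrix.head_cons,
          Matrix.head_fin_const] at h11
        field_simp at h11
        have key : (xb * q * (q - p * x) ^ 3 * (Q - p * xt) * (q - P * xb) * (PP * PP')) *
            (xbt * ((q - P * xb) * (p - Q * xt)) - x * ((P - q * xb) * (Q - p * xt))) = 0 := by
          linear_combination (-(xb * (q - p * x) ^ 3 * PP * PP')) * h11 +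
            (x * xb * xbt * (q - p * x) ^ 3 * (Q - p * xt) * (q - P * xb) ^ 2 * PP * PP' * (-1)) * hPP +
            (x * xb ^ 2 * (q - p * x) ^ 3 * (Q - p * xt) ^ 2 * (q - P * xb) * PP * PP') * hPP' +
            (x * xb ^ 2 * (q - p * x) ^ 3 * (Q - p * xt) ^ 2 * (q - P * xb) * PP * PP' * (-1)) * hQQ +
            (x * xb * xbt * (q - p * x) ^ 3 * (Q - p * xt) * (q - P * xb) ^ 2 * PP * PP') * hQQ'
        have hne : xb * q * (q - p * x) ^ 3 * (Q - p * xt) * (q - P * xb) * (PP * PP') ≠ 0 := by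
          exact mul_ne_zero (mul_ne_zero (mul_ne_zero (mul_ne_zero (mul_ne_zero hxb hq)
            (pow_ne_zero 3 h1)) h2) h3) (mul_ne_zero hPP0 hPP'0)
        have hz := (mul_eq_zero.mp key).resolve_left hne
        linear_combination hz
    field_simp
    linear_combination hE
  · intro h
    have hE : xbt * ((q - P * xb) * (p - Q * xt)) = x * ((P - q * xb) * (Q - p * xt)) := by
      field_simp at h
      linear_combination h
    intro lam PP PP' QQ QQ' hPP hPP' hQQ hQQ'
    have e11 : (P - Q * xbt + QQ' ^ 2 * xbt / (Q - p * xt)) * (QQ * QQ' / (q - p * x)) +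
        (PP * QQ' * xbt / (p * xt - Q)) * (PP * QQ / (q - p * x)) =
        (QQ * QQ' / (q - P * xb)) * (P - q * xb + QQ ^ 2 * xb / (q - p * x)) +
        (PP' * QQ' / (P * xb - q)) * (PP' * QQ * xb / (q - p * x)) := by
      field_simp
      linear_combination (p * QQ * QQ' * (Q - p * xt) * (q - P * xb) * (-1)) * hE +
        (xbt * QQ * QQ' * (Q - p * xt) * (q - P * xb) ^ 2 * (-1)) * hPP +
        (xb * QQ * QQ' * (Q - p * xt) ^ 2 * (q - P * xb)) * hPP' +
        (xb * QQ * QQ' * (Q - p * xt) ^ 2 * (q - P * xb) * (-1)) * hQQ +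
        (xbt * QQ * QQ' * (Q - p * xt) * (q - P * xb) ^ 2) * hQQ'
    have e12 : (P - Q * xbt + QQ' ^ 2 * xbt / (Q - p * xt)) * (PP * QQ' / (p * x - q)) +
        (PP * QQ' * xbt / (p * xt - Q)) * (PP ^ 2 / (p * x - q) + (Q * xt - p) / x) =
        (QQ * QQ' / (q - P * xb)) * (PP * QQ * xb / (p * x - q)) +
        (PP' * QQ' / (P * xb - q)) * (PP * PP' * xb / (p * x - q)) := by
      field_simp
      linear_combination (q * PP * QQ' * (Q - p * xt) * (q - P * xb) * (-1)) * hE +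
        (x * xbt * PP * QQ' * (Q - p * xt) * (q - P * xb) ^ 2 * (-1)) * hPP +
        (x * xb * PP * QQ' * (Q - p * xt) ^ 2 * (q - P * xb)) * hPP' +
        (x * xb * PP * QQ' * (Q - p * xt) ^ 2 * (q - P * xb) * (-1)) * hQQ +
        (x * xbt * PP * QQ' * (Q - p * xt) * (q - P * xb) ^ 2) * hQQ'
    have e21 : (PP' * QQ' * xbt / (Q - p * xt)) * (QQ * QQ' / (q - p * x)) +
        (PP * PP' * xbt / (p * xt - Q)) * (PP * QQ / (q - p * x)) =
        (PP' * QQ / (q - P * xb)) * (P - q * xb + QQ ^ 2 * xb / (q - p * x)) +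
        (PP' ^ 2 / (P * xb - q) + (Q * xbt - P) / xb) * (PP' * QQ * xb / (q - p * x)) := by
      field_simp
      linear_combination (p * PP' * QQ * (Q - p * xt) * (q - P * xb) * (-1)) * hE +
        (xbt * PP' * QQ * (Q - p * xt) * (q - P * xb) ^ 2 * (-1)) * hPP +
        (xb * PP' * QQ * (Q - p * xt) ^ 2 * (q - P * xb)) * hPP' +
        (xb * PP' * QQ * (Q - p * xt) ^ 2 * (q - P * xb) * (-1)) * hQQ +
        (xbt * PP' * QQ * (Q - p * xt) * (q - P * xb) ^ 2) * hQQ'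
    have e22 : (PP' * QQ' * xbt / (Q - p * xt)) * (PP * QQ' / (p * x - q)) +
        (PP * PP' * xbt / (p * xt - Q)) * (PP ^ 2 / (p * x - q) + (Q * xt - p) / x) =
        (PP' * QQ / (q - P * xb)) * (PP * QQ * xb / (p * x - q)) +
        (PP' ^ 2 / (P * xb - q) + (Q * xbt - P) / xb) * (PP * PP' * xb / (p * x - q)) := by
      field_simp
      linear_combination (q * PP * PP' * (Q - p * xt) * (q - P * xb) * (-1)) * hE +
        (x * xbt * PP * PP' * (Q - p * xt) * (q - P * xb) ^ 2 * (-1)) * hPP +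
        (x * xb * PP * PP' * (Q - p * xt) ^ 2 * (q - P * xb)) * hPP' +
        (x * xb * PP * PP' * (Q - p * xt) ^ 2 * (q - P * xb) * (-1)) * hQQ +
        (x * xbt * PP * PP' * (Q - p * xt) * (q - P * xb) ^ 2) * hQQ'
    rw [Matrix.mul_fin_two, Matrix.mul_fin_two, e11, e12, e21, e22]
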